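/- Let n ≥ 2, d ≥ 1, and suppose n orthonormal bases {|y_{x_y}⟩}_{x_y=1}^d (y = 1,…,n) of ℂ^d form an n-fold unbiased set (nUB). Then for every x ∈ [d]^n, the Gram determinant det(⟨y_{x_y}|y'_{x_{y'}}⟩)_{y,y'=1}^n equals d(d−1)(d−2)⋯(d−n+1)/d^n; in particular it is independent of x. -/

import Mathlib

open scoped InnerProductSpace

open scoped Classical in
/-- The set of full cycles (`card ι`-cycles) in the permutation group of `ι`. -/
noncomputable def nCycles (ι : Type) [Fintype ι] [DecidableEq ι] : Finset (Equiv.Perm ι) :=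
  Finset.univ.filter fun σ => σ.IsCycle ∧ σ.support = Finset.univ

/-- A family of `n` orthonormal bases of `ℂ^d` is `n`-fold unbiased (an `n`UB) if for every
index tuple `x`, the sum over all `n`-cycles `σ` of the cyclic products of overlaps equals
`(n-1)!/d^(n-1)`. -/
def IsNUB {ι : Type} [Fintype ι] [DecidableEq ι] {d : ℕ}
    (B : ι → OrthonormalBasis (Fin d) ℂ (EuclideanSpace ℂ (Fin d))) : Prop :=
  ∀ x : ι → Fin d,
    (∑ σ ∈ nCycles ι, ∏ y, ⟪B y (x y), B (σ y) (x (σ y))⟫_ℂ)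
      = ((Fintype.card ι - 1).factorial : ℂ) / (d : ℂ) ^ (Fintype.card ι - 1)

open Equiv Equiv.Perm Finset

theorem my_extend {α : Type*} [Fintype α] [DecidableEq α] {τ : Equiv.Perm α}
    (hτ : τ.IsCycle) {z b : α} (hz : z ∉ τ.support) (hb : b ∈ τ.support) :
    (Equiv.swap z b * τ).IsCycle ∧ (Equiv.swap z b * τ).support = insert z τ.support := by
  have hτz : τ z = z := Equiv.Perm.notMem_support.mp hz
  have hzb : z ≠ b := by rintro rfl; exact hz hb
  have hbz : τ b ≠ b := Equiv.Perm.mem_support.mp hb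
  set σ := Equiv.swap z b * τ with hσdef
  have happ : ∀ y, y ≠ z → τ y ≠ b → σ y = τ y := by
    intro y hy hyb
    have h1 : τ y ≠ z := by
      intro h
      exact hy (τ.injective (h.trans hτz.symm))
    simp [hσdef, Equiv.Perm.mul_apply, Equiv.swap_apply_of_ne_of_ne h1 hyb]
  have hσz : σ z = b := by simp [hσdef, Equiv.Perm.mul_apply, hτz]
  have hsupp : σ.support = insert z τ.support := by
    ext y
    simp only [Equiv.Perm.mem_support, Finset.mem_insert]
    by_cases hy : y = z
    · subst hy; simp [hσz, Ne.symm hzb]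
    · by_cases hyb : τ y = b
      · have hyb' : y ≠ b := by rintro rfl; exact hbz hyb
        have hσy : σ y = z := by simp [hσdef, Equiv.Perm.mul_apply, hyb]
        constructor
        · intro _; right; rw [hyb]; exact Ne.symm hyb'
        · intro _; rw [hσy]; exact Ne.symm hy
      · rw [happ y hy hyb]
        simp [hy]
  refine ⟨⟨z, by rw [hσz]; exact Ne.symm hzb, ?_⟩, hsupp⟩
  intro y hy
  by_cases hyz : y = z
  · subst hyz; exact Equiv.Perm.SameCycle.refl _ _
  · have hyS : y ∈ τ.support := by
      have h := Equiv.Perm.mem_support.mpr hy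
      rw [hsupp, Finset.mem_insert] at h
      tauto
    have hby : Equiv.Perm.SameCycle τ b y := hτ.sameCycle hbz (Equiv.Perm.mem_support.mp hyS)
    obtain ⟨i, hi, hib⟩ := hby.exists_pow_eq'
    have key : ∀ i, i < orderOf τ → (σ ^ (i + 1)) z = (τ ^ i) b := by
      intro i
      induction i with
      | zero => intro _; simpa using hσz
      | succ k ih =>
        intro hk
        have hk' : k < orderOf τ := Nat.lt_of_succ_lt hk
        have hkb : (τ ^ k) b ∈ τ.support := Equiv.Perm.pow_apply_mem_support.mpr hb
        have h1 : (τ ^ k) b ≠ z := by rintro h; exact hz (h ▸ hkb)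
        have h2 : τ ((τ ^ k) b) ≠ b := by
          intro h
          have h3 : (τ ^ (k + 1)) b = b := by
            rw [pow_succ']; simpa [Equiv.Perm.mul_apply] using h
          have h4 : τ ^ (k + 1) = 1 := (hτ.pow_eq_one_iff' hbz).mpr h3
          have h5 : orderOf τ ∣ k + 1 := orderOf_dvd_of_pow_eq_one h4
          exact absurd (Nat.le_of_dvd (Nat.succ_pos k) h5) (not_le.mpr hk)
        calc (σ ^ (k + 1 + 1)) z = σ ((σ ^ (k + 1)) z) := by
              rw [pow_succ', Equiv.Perm.mul_apply]
          _ = σ ((τ ^ k) b) := by rw [ih hk']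
          _ = τ ((τ ^ k) b) := happ _ h1 h2
          _ = (τ ^ (k + 1)) b := by rw [pow_succ', Equiv.Perm.mul_apply]
    exact ⟨((i + 1 : ℕ) : ℤ), by rw [zpow_natCast, key i hi, hib]⟩

open scoped Classical in
noncomputable def cycS (n : ℕ) (S : Finset (Fin n)) : Finset (Equiv.Perm (Fin n)) :=
  Finset.univ.filter fun σ => σ.IsCycle ∧ σ.support = S

open scoped Classical in
noncomputable def permS (n : ℕ) (S : Finset (Fin n)) : Finset (Equiv.Perm (Fin n)) :=
  Finset.univ.filter fun σ => σ.support ⊆ S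

noncomputable def ov {n d : ℕ} (B : Fin n → OrthonormalBasis (Fin d) ℂ (EuclideanSpace ℂ (Fin d)))
    (x : Fin n → Fin d) (σ : Equiv.Perm (Fin n)) (y : Fin n) : ℂ :=
  ⟪B y (x y), B (σ y) (x (σ y))⟫_ℂ

noncomputable def sgn {n : ℕ} (σ : Equiv.Perm (Fin n)) : ℂ :=
  ((Equiv.Perm.sign σ : ℤ) : ℂ)

theorem sgn_mul {n : ℕ} (a b : Equiv.Perm (Fin n)) : sgn (a * b) = sgn a * sgn b := by
  simp [sgn, map_mul]

theorem ov_apply_eq {n d : ℕ} (B : Fin n → OrthonormalBasis (Fin d) ℂ (EuclideanSpace ℂ (Fin d)))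
    (x : Fin n → Fin d) {σ π : Equiv.Perm (Fin n)} {y : Fin n} (h : σ y = π y) :
    ov B x σ y = ov B x π y := by
  simp [ov, h]

theorem ov_fixed {n d : ℕ} (B : Fin n → OrthonormalBasis (Fin d) ℂ (EuclideanSpace ℂ (Fin d)))
    (x : Fin n → Fin d) {σ : Equiv.Perm (Fin n)} {y : Fin n} (h : σ y = y) :
    ov B x σ y = 1 := by
  rw [ov, h]
  simpa using orthonormal_iff_ite.mp (B y).orthonormal (x y) (x y)

theorem contract_sum {n d : ℕ} (B : Fin n → OrthonormalBasis (Fin d) ℂ (EuclideanSpace ℂ (Fin d)))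
    (x : Fin n → Fin d) {S : Finset (Fin n)} {z : Fin n}
    (hz : z ∉ S) {σ : Equiv.Perm (Fin n)} (hsupp : σ.support ⊆ insert z S) (hσz : σ z ≠ z) :
    ∑ i : Fin d, ∏ y ∈ insert z S, ov B (Function.update x z i) σ y
      = ∏ y ∈ S, ov B x (Equiv.swap z (σ z) * σ) y := by
  obtain ⟨a, hσa⟩ : ∃ a, σ a = z := ⟨σ⁻¹ z, Equiv.apply_symm_apply σ z⟩
  have haz : a ≠ z := by
    intro h; rw [h] at hσa; exact hσz hσa
  have haS : a ∈ S := by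
    have : a ∈ σ.support := Equiv.Perm.mem_support.mpr (by rw [hσa]; exact Ne.symm haz)
    rcases Finset.mem_insert.mp (hsupp this) with h | h
    · exact absurd h haz
    · exact h
  have hσzS : σ z ∈ S := by
    have h1 : σ z ∈ σ.support := Equiv.Perm.apply_mem_support.mpr (Equiv.Perm.mem_support.mpr hσz)
    rcases Finset.mem_insert.mp (hsupp h1) with h | h
    · exact absurd h hσz
    · exact h
  have key : ∀ y ∈ S.erase a, (Equiv.swap z (σ z) * σ) y = σ y ∧ σ y ≠ z ∧ y ≠ z := by
    intro y hy
    obtain ⟨hya, hyS⟩ := Finset.mem_erase.mp hy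
    have hyz : y ≠ z := fun h => hz (h ▸ hyS)
    have h1 : σ y ≠ z := by
      intro h
      exact hya (σ.injective (h.trans hσa.symm))
    have h2 : σ y ≠ σ z := fun h => hyz (σ.injective h)
    exact ⟨by simp [Equiv.Perm.mul_apply, Equiv.swap_apply_of_ne_of_ne h1 h2], h1, hyz⟩
  have h1 : ∀ i : Fin d, ∏ y ∈ insert z S, ov B (Function.update x z i) σ y
      = (⟪B a (x a), (B z) i⟫_ℂ * ⟪(B z) i, B (σ z) (x (σ z))⟫_ℂ) *
        ∏ y ∈ S.erase a, ov B x σ y := by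
    intro i
    rw [Finset.prod_insert hz, ← Finset.prod_erase_mul S _ haS]
    have uz : Function.update x z i z = i := Function.update_self _ _ _
    have uσz : Function.update x z i (σ z) = x (σ z) := Function.update_of_ne hσz _ _
    have ua : Function.update x z i a = x a := Function.update_of_ne haz _ _
    have e1 : ov B (Function.update x z i) σ z = ⟪(B z) i, B (σ z) (x (σ z))⟫_ℂ := by
      simp only [ov, uz, uσz]
    have e2 : ov B (Function.update x z i) σ a = ⟪B a (x a), (B z) i⟫_ℂ := by
      simp only [ov]
      rw [hσa, uz, ua]
    have e3 : ∀ y ∈ S.erase a, ov B (Function.update x z i) σ y = ov B x σ y := by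
      intro y hy
      obtain ⟨-, hy1, hy2⟩ := key y hy
      simp only [ov, Function.update_of_ne hy1, Function.update_of_ne hy2]
    rw [e1, e2, Finset.prod_congr rfl e3]
    ring
  rw [Finset.sum_congr rfl fun i _ => h1 i, ← Finset.sum_mul]
  rw [(B z).sum_inner_mul_inner]
  rw [← Finset.prod_erase_mul S _ haS]
  have ha4 : (Equiv.swap z (σ z) * σ) a = σ z := by
    rw [Equiv.Perm.mul_apply, hσa, Equiv.swap_apply_left]
  have e4 : ov B x (Equiv.swap z (σ z) * σ) a = ⟪B a (x a), B (σ z) (x (σ z))⟫_ℂ := by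
    simp only [ov, ha4]
  rw [e4, Finset.prod_congr rfl fun y hy => (ov_apply_eq B x (key y hy).1).symm]
  exact mul_comm _ _

theorem mem_cycS {n : ℕ} {S : Finset (Fin n)} {σ : Equiv.Perm (Fin n)} :
    σ ∈ cycS n S ↔ σ.IsCycle ∧ σ.support = S := by
  simp [cycS]

theorem cyc_bij {n : ℕ} {S : Finset (Fin n)} {z : Fin n} (hz : z ∉ S) (hS : 2 ≤ S.card)
    (g : Equiv.Perm (Fin n) → ℂ) :
    ∑ σ ∈ cycS n (insert z S), g (Equiv.swap z (σ z) * σ)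
      = (S.card : ℂ) * ∑ τ ∈ cycS n S, g τ := by
  have main : ∑ σ ∈ cycS n (insert z S), g (Equiv.swap z (σ z) * σ)
      = ∑ p ∈ S ×ˢ cycS n S, g p.2 := by
    refine Finset.sum_bij' (fun σ _ => (σ⁻¹ z, Equiv.swap z (σ z) * σ))
      (fun p _ => Equiv.swap z (p.2 p.1) * p.2) ?_ ?_ ?_ ?_ ?_
    · -- forward membership
      intro σ hσ
      obtain ⟨hcyc, hsupp⟩ := mem_cycS.mp hσ
      have hzmem : z ∈ σ.support := by rw [hsupp]; exact Finset.mem_insert_self z S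
      have hσz : σ z ≠ z := Equiv.Perm.mem_support.mp hzmem
      have hainv : σ (σ⁻¹ z) = z := Equiv.apply_symm_apply σ z
      have haz : σ⁻¹ z ≠ z := by
        intro h; rw [h] at hainv; exact hσz hainv
      have haS : σ⁻¹ z ∈ S := by
        have h1 : σ⁻¹ z ∈ σ.support := by
          rw [Equiv.Perm.mem_support, hainv]; exact Ne.symm haz
        rw [hsupp] at h1
        rcases Finset.mem_insert.mp h1 with h | h
        · exact absurd h haz
        · exact h
      have hσσz : σ (σ z) ≠ z := by
        intro h
        have hswap : σ = Equiv.swap z (σ z) := hcyc.eq_swap_of_apply_apply_eq_self hσz h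
        have hc : σ.support = {z, σ z} := by
          conv_lhs => rw [hswap]
          exact Equiv.Perm.support_swap (Ne.symm hσz)
        have hcard := congrArg Finset.card (hsupp.symm.trans hc)
        rw [Finset.card_insert_of_notMem hz] at hcard
        have h2 : ({z, σ z} : Finset (Fin n)).card ≤ 2 := by
          refine le_trans (Finset.card_insert_le _ _) ?_
          simp
        omega
      refine Finset.mem_product.mpr ⟨haS, mem_cycS.mpr ⟨hcyc.swap_mul hσz hσσz, ?_⟩⟩
      rw [Equiv.Perm.support_swap_mul_eq σ z hσσz, hsupp, Finset.sdiff_singleton_eq_erase,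
        Finset.erase_insert hz]
    · -- backward membership
      intro p hp
      obtain ⟨haS, hτ⟩ := Finset.mem_product.mp hp
      obtain ⟨hcyc, hsupp⟩ := mem_cycS.mp hτ
      have hzs : z ∉ p.2.support := by rw [hsupp]; exact hz
      have hbs : p.2 p.1 ∈ p.2.support := by
        rw [Equiv.Perm.apply_mem_support, hsupp]; exact haS
      obtain ⟨h1, h2⟩ := my_extend hcyc hzs hbs
      rw [hsupp] at h2
      exact mem_cycS.mpr ⟨h1, h2⟩
    · -- left inverse
      intro σ hσ
      have h1 : (Equiv.swap z (σ z) * σ) (σ⁻¹ z) = σ z := by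
        rw [Equiv.Perm.mul_apply, show σ (σ⁻¹ z) = z from Equiv.apply_symm_apply σ z, Equiv.swap_apply_left]
      simp only [h1, ← mul_assoc, Equiv.swap_mul_self, one_mul]
    · -- right inverse
      intro p hp
      obtain ⟨haS, hτ⟩ := Finset.mem_product.mp hp
      obtain ⟨hcyc, hsupp⟩ := mem_cycS.mp hτ
      have hzs : p.2 z = z := by
        rw [← Equiv.Perm.notMem_support, hsupp]; exact hz
      have hb : (Equiv.swap z (p.2 p.1) * p.2) p.1 = z := by
        rw [Equiv.Perm.mul_apply, Equiv.swap_apply_right]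
      have hbz : (Equiv.swap z (p.2 p.1) * p.2) z = p.2 p.1 := by
        rw [Equiv.Perm.mul_apply, hzs, Equiv.swap_apply_left]
      refine Prod.ext ?_ ?_
      · show (Equiv.swap z (p.2 p.1) * p.2)⁻¹ z = p.1
        rw [Equiv.Perm.inv_eq_iff_eq]; exact hb.symm
      · show Equiv.swap z ((Equiv.swap z (p.2 p.1) * p.2) z) * (Equiv.swap z (p.2 p.1) * p.2) = p.2
        rw [hbz, ← mul_assoc, Equiv.swap_mul_self, one_mul]
    · intro σ hσ; rfl
  rw [main, Finset.sum_product]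
  have h3 : ∀ a ∈ S, ∑ τ ∈ cycS n S, g ((a, τ)).2 = ∑ τ ∈ cycS n S, g τ := fun _ _ => rfl
  rw [Finset.sum_congr rfl h3, Finset.sum_const, nsmul_eq_mul]

theorem kub {n d : ℕ} (hn : 2 ≤ n) (hd : 1 ≤ d)
    (B : Fin n → OrthonormalBasis (Fin d) ℂ (EuclideanSpace ℂ (Fin d))) (hB : IsNUB B) :
    ∀ (m : ℕ) (S : Finset (Fin n)), Sᶜ.card = m → 2 ≤ S.card → ∀ (x : Fin n → Fin d),
      ∑ σ ∈ cycS n S, ∏ y ∈ S, ov B x σ y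
        = ((S.card - 1).factorial : ℂ) / (d : ℂ) ^ (S.card - 1) := by
  intro m
  induction m with
  | zero =>
    intro S hSc hS2 x
    have hS : S = Finset.univ := by
      rwa [Finset.card_eq_zero, Finset.compl_eq_empty_iff] at hSc
    subst hS
    have h1 := hB x
    rw [Fintype.card_fin] at h1
    have h2 : cycS n Finset.univ = nCycles (Fin n) := by
      ext σ; simp [cycS, nCycles]
    rw [Finset.card_univ, Fintype.card_fin, h2]
    exact h1
  | succ m ih =>
    intro S hSc hS2 x
    have hSne : Sᶜ.Nonempty := by rw [← Finset.card_pos, hSc]; omega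
    obtain ⟨z, hzc⟩ := hSne
    have hz : z ∉ S := Finset.mem_compl.mp hzc
    have hTc : (insert z S)ᶜ.card = m := by
      rw [Finset.compl_insert, Finset.card_erase_of_mem hzc, hSc]
      omega
    have hTcard : (insert z S).card = S.card + 1 := Finset.card_insert_of_notMem hz
    have hT2 : 2 ≤ (insert z S).card := by omega
    have hIH := ih (insert z S) hTc hT2
    have hd0 : (d : ℂ) ≠ 0 := Nat.cast_ne_zero.mpr (by omega)
    have key : ∑ i : Fin d, ∑ σ ∈ cycS n (insert z S),
          ∏ y ∈ insert z S, ov B (Function.update x z i) σ y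
        = (d : ℂ) * ((S.card.factorial : ℂ) / (d : ℂ) ^ S.card) := by
      rw [Finset.sum_congr rfl fun i _ => hIH (Function.update x z i)]
      rw [Finset.sum_const, Finset.card_univ, Fintype.card_fin, nsmul_eq_mul]
      rw [hTcard]
      norm_num
    rw [Finset.sum_comm] at key
    have key2 : ∀ σ ∈ cycS n (insert z S),
        ∑ i : Fin d, ∏ y ∈ insert z S, ov B (Function.update x z i) σ y
          = ∏ y ∈ S, ov B x (Equiv.swap z (σ z) * σ) y := by
      intro σ hσ
      obtain ⟨hcyc, hsupp⟩ := mem_cycS.mp hσ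
      exact contract_sum B x hz (le_of_eq hsupp)
        (Equiv.Perm.mem_support.mp (by rw [hsupp]; exact Finset.mem_insert_self z S))
    rw [Finset.sum_congr rfl key2, cyc_bij hz hS2 (fun τ => ∏ y ∈ S, ov B x τ y)] at key
    have hkc : ((S.card : ℕ) : ℂ) ≠ 0 := Nat.cast_ne_zero.mpr (by omega)
    have hfact : (S.card.factorial : ℂ) = (S.card : ℂ) * ((S.card - 1).factorial : ℂ) := by
      have h3 := Nat.mul_factorial_pred (by omega : S.card ≠ 0)
      rw [← h3]; push_cast; ring
    have hpow : (d : ℂ) ^ S.card = (d : ℂ) ^ (S.card - 1) * d := by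
      rw [← pow_succ]
      congr 1
      omega
    apply mul_left_cancel₀ hkc
    rw [key, hfact, hpow]
    have hp0 : (d : ℂ) ^ (S.card - 1) ≠ 0 := pow_ne_zero _ hd0
    field_simp

open scoped Classical in
noncomputable def Kset (n : ℕ) (S : Finset (Fin n)) (z : Fin n) : Finset (Equiv.Perm (Fin n)) :=
  Finset.univ.filter fun c => (c = 1 ∨ (c.IsCycle ∧ z ∈ c.support)) ∧ c.support ⊆ S

theorem mem_Kset {n : ℕ} {S : Finset (Fin n)} {z : Fin n} {c : Equiv.Perm (Fin n)} :
    c ∈ Kset n S z ↔ (c = 1 ∨ (c.IsCycle ∧ z ∈ c.support)) ∧ c.support ⊆ S := by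
  simp [Kset]

theorem mem_permS {n : ℕ} {S : Finset (Fin n)} {σ : Equiv.Perm (Fin n)} :
    σ ∈ permS n S ↔ σ.support ⊆ S := by
  simp [permS]

open scoped Classical in
theorem decomp {n d : ℕ} (B : Fin n → OrthonormalBasis (Fin d) ℂ (EuclideanSpace ℂ (Fin d)))
    (x : Fin n → Fin d) {S : Finset (Fin n)} {z : Fin n} (hzS : z ∈ S) :
    ∑ σ ∈ permS n S, sgn σ * ∏ y ∈ S, ov B x σ y
      = ∑ c ∈ Kset n S z,
          (sgn c * ∏ y ∈ insert z c.support, ov B x c y) *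
            ∑ σ' ∈ permS n (S \ insert z c.support),
              sgn σ' * ∏ y ∈ S \ insert z c.support, ov B x σ' y := by
  have hrhs : ∀ c ∈ Kset n S z,
      (sgn c * ∏ y ∈ insert z c.support, ov B x c y) *
        ∑ σ' ∈ permS n (S \ insert z c.support),
          sgn σ' * ∏ y ∈ S \ insert z c.support, ov B x σ' y
      = ∑ σ' ∈ permS n (S \ insert z c.support),
          (sgn c * ∏ y ∈ insert z c.support, ov B x c y) *
            (sgn σ' * ∏ y ∈ S \ insert z c.support, ov B x σ' y) := by
    intro c _; rw [Finset.mul_sum]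
  rw [Finset.sum_congr rfl hrhs, Finset.sum_sigma']
  refine Finset.sum_bij' (fun σ _ => ⟨σ.cycleOf z, σ * (σ.cycleOf z)⁻¹⟩)
    (fun p _ => p.2 * p.1) ?_ ?_ ?_ ?_ ?_
  · -- forward membership
    intro σ hσ
    have hsupp : σ.support ⊆ S := mem_permS.mp hσ
    set c := σ.cycleOf z with hc
    have fc_sub : c.support ⊆ σ.support := Equiv.Perm.support_cycleOf_le σ z
    have f5 : ∀ w ∈ c.support, (σ * c⁻¹) w = w := by
      intro w hw
      have h1 : c⁻¹ w ∈ c.support := by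
        rw [← Equiv.Perm.support_inv] at hw ⊢
        exact Equiv.Perm.apply_mem_support.mpr hw
      have h2 : c (c⁻¹ w) = σ (c⁻¹ w) :=
        ((Equiv.Perm.mem_support_cycleOf_iff.mp h1).1).cycleOf_apply
      rw [Equiv.Perm.mul_apply, ← h2, show c (c⁻¹ w) = w from Equiv.apply_symm_apply c w]
    have f4 : ∀ w, w ∉ c.support → (σ * c⁻¹) w = σ w := by
      intro w hw
      rw [← Equiv.Perm.support_inv] at hw
      rw [Equiv.Perm.mul_apply, Equiv.Perm.notMem_support.mp hw]
    refine Finset.mem_sigma.mpr ⟨mem_Kset.mpr ⟨?_, fc_sub.trans hsupp⟩, mem_permS.mpr ?_⟩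
    · by_cases hσz : σ z = z
      · exact Or.inl ((Equiv.Perm.cycleOf_eq_one_iff σ).mpr hσz)
      · exact Or.inr ⟨Equiv.Perm.isCycle_cycleOf σ hσz,
          Equiv.Perm.mem_support_cycleOf_iff.mpr
            ⟨Equiv.Perm.SameCycle.refl _ _, Equiv.Perm.mem_support.mpr hσz⟩⟩
    · intro w hw
      have hwc : w ∉ c.support := fun h => (Equiv.Perm.mem_support.mp hw) (f5 w h)
      have hσw : σ w ≠ w := by
        rw [← f4 w hwc]; exact Equiv.Perm.mem_support.mp hw
      refine Finset.mem_sdiff.mpr ⟨hsupp (Equiv.Perm.mem_support.mpr hσw), ?_⟩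
      intro hins
      rcases Finset.mem_insert.mp hins with h | h
      · subst h
        exact hwc (Equiv.Perm.mem_support_cycleOf_iff.mpr
          ⟨Equiv.Perm.SameCycle.refl _ _, Equiv.Perm.mem_support.mpr hσw⟩)
      · exact hwc h
  · -- backward membership
    intro p hp
    obtain ⟨hK, hperm⟩ := Finset.mem_sigma.mp hp
    obtain ⟨_, hcS⟩ := mem_Kset.mp hK
    have hσ'S : p.2.support ⊆ S := (mem_permS.mp hperm).trans (Finset.sdiff_subset)
    refine mem_permS.mpr ?_
    refine (Equiv.Perm.support_mul_le p.2 p.1).trans ?_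
    exact Finset.union_subset hσ'S hcS
  · -- left inverse
    intro σ hσ
    exact inv_mul_cancel_right σ (σ.cycleOf z)
  · -- right inverse
    intro p hp
    obtain ⟨hK, hperm⟩ := Finset.mem_sigma.mp hp
    obtain ⟨hc1or, hcS⟩ := mem_Kset.mp hK
    have hσ'sub := mem_permS.mp hperm
    have hdisj : _root_.Disjoint p.2.support p.1.support := by
      refine Finset.disjoint_left.mpr fun w hw => ?_
      have := Finset.mem_sdiff.mp (hσ'sub hw)
      exact fun hwc => this.2 (Finset.mem_insert.mpr (Or.inr hwc))
    have hDisj : p.2.Disjoint p.1 := Equiv.Perm.disjoint_iff_disjoint_support.mpr hdisj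
    have hcomm : Commute p.2 p.1 := hDisj.commute
    have hz' : p.2 z = z := by
      rw [← Equiv.Perm.notMem_support]
      intro hzmem
      exact (Finset.mem_sdiff.mp (hσ'sub hzmem)).2 (Finset.mem_insert_self z _)
    have hc1 : (p.2 * p.1).cycleOf z = p.1 := by
      rw [hcomm.eq, Equiv.Perm.cycleOf_mul_of_apply_right_eq_self hcomm.symm z hz']
      rcases hc1or with h1 | ⟨h2, h3⟩
      · rw [h1]; exact Equiv.Perm.cycleOf_one z
      · exact h2.cycleOf_eq (Equiv.Perm.mem_support.mp h3)
    simp only [hc1, mul_inv_cancel_right]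
  · -- summand equality
    intro σ hσ
    have hsupp : σ.support ⊆ S := mem_permS.mp hσ
    set c := σ.cycleOf z with hc
    have fc_sub : c.support ⊆ σ.support := Equiv.Perm.support_cycleOf_le σ z
    have fc_z : c z = σ z := Equiv.Perm.cycleOf_apply_self σ z
    have fc_on : ∀ w ∈ c.support, c w = σ w := fun w hw =>
      ((Equiv.Perm.mem_support_cycleOf_iff.mp hw).1).cycleOf_apply
    have f4 : ∀ w, w ∉ c.support → (σ * c⁻¹) w = σ w := by
      intro w hw
      rw [← Equiv.Perm.support_inv] at hw
      rw [Equiv.Perm.mul_apply, Equiv.Perm.notMem_support.mp hw]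
    have hTS : insert z c.support ⊆ S :=
      Finset.insert_subset_iff.mpr ⟨hzS, fc_sub.trans hsupp⟩
    have hsplit := Finset.prod_sdiff (f := fun y => ov B x σ y) hTS
    have hT : ∀ y ∈ insert z c.support, ov B x σ y = ov B x c y := by
      intro y hy
      rcases Finset.mem_insert.mp hy with h | h
      · subst h; exact ov_apply_eq B x fc_z.symm
      · exact ov_apply_eq B x (fc_on y h).symm
    have hRest : ∀ y ∈ S \ insert z c.support, ov B x σ y = ov B x (σ * c⁻¹) y := by
      intro y hy
      have hyc : y ∉ c.support := fun h =>
        (Finset.mem_sdiff.mp hy).2 (Finset.mem_insert.mpr (Or.inr h))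
      exact ov_apply_eq B x (f4 y hyc).symm
    have hσeq : σ = (σ * c⁻¹) * c := (inv_mul_cancel_right σ c).symm
    have hsgn : sgn σ = sgn (σ * c⁻¹) * sgn c := by
      conv_lhs => rw [hσeq]
      exact sgn_mul _ _
    rw [← hsplit, Finset.prod_congr rfl hT, Finset.prod_congr rfl hRest, hsgn]
    ring

theorem castDesc {d : ℕ} (m : ℕ) :
    (d.descFactorial (m + 1) : ℂ) = ((d : ℂ) - m) * (d.descFactorial m : ℂ) := by
  by_cases h : m ≤ d
  · rw [Nat.descFactorial_succ]
    push_cast [Nat.cast_sub h]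
    ring
  · push_neg at h
    rw [Nat.descFactorial_eq_zero_iff_lt.mpr h, Nat.descFactorial_eq_zero_iff_lt.mpr (by omega)]
    simp

theorem Aid {d : ℕ} : ∀ k : ℕ,
    (d : ℂ) * ∑ j ∈ Finset.range (k + 1),
        (-1) ^ j * (k.descFactorial j : ℂ) * (d.descFactorial (k - j) : ℂ)
      = (d.descFactorial (k + 1) : ℂ) := by
  intro k
  induction k with
  | zero => simp
  | succ k ih =>
    rw [Finset.sum_range_succ']
    have hterm : ∀ i, (-1 : ℂ) ^ (i + 1) * ((k + 1).descFactorial (i + 1) : ℂ) *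
          (d.descFactorial (k + 1 - (i + 1)) : ℂ)
        = (-((k : ℂ) + 1)) * ((-1) ^ i * (k.descFactorial i : ℂ) *
            (d.descFactorial (k - i) : ℂ)) := by
      intro i
      rw [Nat.succ_descFactorial_succ]
      have he : k + 1 - (i + 1) = k - i := by omega
      rw [he]
      push_cast
      ring
    rw [Finset.sum_congr rfl fun i _ => hterm i, ← Finset.mul_sum]
    have h0 : (-1 : ℂ) ^ 0 * (((k + 1).descFactorial 0 : ℕ) : ℂ) *
        (d.descFactorial (k + 1 - 0) : ℂ) = (d.descFactorial (k + 1) : ℂ) := by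
      simp
    rw [h0]
    have hcd := castDesc (d := d) (k + 1)
    push_cast at hcd ⊢
    linear_combination (-(k : ℂ) - 1) * ih - hcd

theorem numeric {d : ℕ} (hd : 1 ≤ d) {m : ℕ} (hm : 1 ≤ m) :
    ∑ j ∈ Finset.range m, ((m - 1).choose j : ℂ) *
        ((-1) ^ j * (j.factorial : ℂ) / (d : ℂ) ^ j *
          ((d.descFactorial (m - 1 - j) : ℂ) / (d : ℂ) ^ (m - 1 - j)))
      = (d.descFactorial m : ℂ) / (d : ℂ) ^ m := by
  obtain ⟨k, rfl⟩ : ∃ k, m = k + 1 := ⟨m - 1, by omega⟩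
  have hd0 : (d : ℂ) ≠ 0 := Nat.cast_ne_zero.mpr (by omega)
  have h1 : k + 1 - 1 = k := by omega
  rw [h1]
  have hterm : ∀ j ∈ Finset.range (k + 1),
      ((k).choose j : ℂ) * ((-1) ^ j * (j.factorial : ℂ) / (d : ℂ) ^ j *
          ((d.descFactorial (k - j) : ℂ) / (d : ℂ) ^ (k - j)))
      = ((-1) ^ j * (k.descFactorial j : ℂ) * (d.descFactorial (k - j) : ℂ)) / (d : ℂ) ^ k := by
    intro j hj
    have hj' : j ≤ k := by
      have := Finset.mem_range.mp hj; omega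
    have hdesc : (k.descFactorial j : ℂ) = (j.factorial : ℂ) * (k.choose j : ℂ) := by
      rw_mod_cast [Nat.descFactorial_eq_factorial_mul_choose]
    have hpow : (d : ℂ) ^ k = (d : ℂ) ^ j * (d : ℂ) ^ (k - j) := by
      rw [← pow_add]; congr 1; omega
    rw [hdesc, hpow]
    have hp1 : (d : ℂ) ^ j ≠ 0 := pow_ne_zero _ hd0
    have hp2 : (d : ℂ) ^ (k - j) ≠ 0 := pow_ne_zero _ hd0
    field_simp
  rw [Finset.sum_congr rfl hterm, ← Finset.sum_div]
  have hA := Aid (d := d) k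
  rw [div_eq_div_iff (pow_ne_zero _ hd0) (pow_ne_zero _ hd0), pow_succ]
  linear_combination ((d : ℂ) ^ k) * hA

open scoped Classical in
theorem master {n d : ℕ} (hn : 2 ≤ n) (hd : 1 ≤ d)
    (B : Fin n → OrthonormalBasis (Fin d) ℂ (EuclideanSpace ℂ (Fin d))) (hB : IsNUB B) :
    ∀ (m : ℕ) (S : Finset (Fin n)) (x : Fin n → Fin d), S.card = m →
      ∑ σ ∈ permS n S, sgn σ * ∏ y ∈ S, ov B x σ y
        = (d.descFactorial m : ℂ) / (d : ℂ) ^ m := by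
  intro m
  induction m using Nat.strong_induction_on with
  | _ m IH =>
    intro S x hcard
    rcases Nat.eq_zero_or_pos m with hm | hm
    · subst hm
      have hS : S = ∅ := Finset.card_eq_zero.mp hcard
      subst hS
      have hperm : permS n ∅ = {1} := by
        ext σ
        simp [permS, Finset.subset_empty, Equiv.Perm.support_eq_empty_iff]
      rw [hperm]
      simp [sgn]
    · obtain ⟨z, hzS⟩ := Finset.card_pos.mp (hcard ▸ hm)
      rw [decomp B x hzS]
      set F : Equiv.Perm (Fin n) → ℂ := fun c =>
        (sgn c * ∏ y ∈ insert z c.support, ov B x c y) *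
          ∑ σ' ∈ permS n (S \ insert z c.support),
            sgn σ' * ∏ y ∈ S \ insert z c.support, ov B x σ' y with hF
      have h1K : (1 : Equiv.Perm (Fin n)) ∈ Kset n S z :=
        mem_Kset.mpr ⟨Or.inl rfl, by simp⟩
      rw [← Finset.add_sum_erase _ F h1K]
      set g : ℕ → ℂ := fun j => (-1) ^ j * (j.factorial : ℂ) / (d : ℂ) ^ j *
          ((d.descFactorial (m - 1 - j) : ℂ) / (d : ℂ) ^ (m - 1 - j)) with hg
      have hSz : (S \ insert z (1 : Equiv.Perm (Fin n)).support) = S.erase z := by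
        rw [Equiv.Perm.support_one]
        ext w
        simp [Finset.mem_sdiff, Finset.mem_erase, and_comm]
      have hcerase : (S.erase z).card = m - 1 := by
        rw [Finset.card_erase_of_mem hzS, hcard]
      have hF1 : F 1 = g 0 := by
        rw [hF, hg]
        simp only [Equiv.Perm.support_one]
        have e1 : sgn (1 : Equiv.Perm (Fin n)) = 1 := by simp [sgn]
        have e2 : ∏ y ∈ insert z (∅ : Finset (Fin n)), ov B x 1 y = 1 := by
          rw [Finset.prod_insert (Finset.notMem_empty z), Finset.prod_empty,
            ov_fixed B x (Equiv.Perm.one_apply z), mul_one]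
        rw [e1, e2]
        have := IH (m - 1) (by omega) (S.erase z) x hcerase
        have hSz' : (S \ insert z (∅ : Finset (Fin n))) = S.erase z := by
          ext w; simp [Finset.mem_sdiff, Finset.mem_erase, and_comm]
        rw [hSz', this]
        simp
      set P2 : Finset (Finset (Fin n)) :=
        S.powerset.filter (fun U => z ∈ U ∧ 2 ≤ U.card) with hP2
      have hmap : ∀ c ∈ (Kset n S z).erase 1, c.support ∈ P2 := by
        intro c hc
        obtain ⟨hc1, hcK⟩ := Finset.mem_erase.mp hc
        obtain ⟨hor, hcs⟩ := mem_Kset.mp hcK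
        rcases hor with h | ⟨hcyc, hzc⟩
        · exact absurd h hc1
        · exact Finset.mem_filter.mpr ⟨Finset.mem_powerset.mpr hcs,
            hzc, hcyc.two_le_card_support⟩
      rw [← Finset.sum_fiberwise_of_maps_to hmap F]
      have hfib : ∀ U ∈ P2,
          ((Kset n S z).erase 1).filter (fun c => c.support = U) = cycS n U := by
        intro U hU
        obtain ⟨hUS, hzU, hU2⟩ := Finset.mem_filter.mp hU
        rw [Finset.mem_powerset] at hUS
        ext c
        constructor
        · intro hc
          obtain ⟨hc', hcs⟩ := Finset.mem_filter.mp hc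
          obtain ⟨hc1, hcK⟩ := Finset.mem_erase.mp hc'
          obtain ⟨hor, _⟩ := mem_Kset.mp hcK
          rcases hor with h | ⟨hcyc, _⟩
          · exact absurd h hc1
          · exact mem_cycS.mpr ⟨hcyc, hcs⟩
        · intro hc
          obtain ⟨hcyc, hcs⟩ := mem_cycS.mp hc
          refine Finset.mem_filter.mpr ⟨Finset.mem_erase.mpr ⟨hcyc.ne_one, ?_⟩, hcs⟩
          exact mem_Kset.mpr ⟨Or.inr ⟨hcyc, hcs ▸ hzU⟩, hcs ▸ hUS⟩
      have hinner : ∀ U ∈ P2, ∑ c ∈ ((Kset n S z).erase 1).filter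
            (fun c => c.support = U), F c = g (U.card - 1) := by
        intro U hU
        rw [hfib U hU]
        obtain ⟨hUS, hzU, hU2⟩ := Finset.mem_filter.mp hU
        rw [Finset.mem_powerset] at hUS
        have hFc : ∀ c ∈ cycS n U, F c =
            (∏ y ∈ U, ov B x c y) * ((-(-1 : ℂ) ^ U.card) *
              ∑ σ' ∈ permS n (S \ U), sgn σ' * ∏ y ∈ S \ U, ov B x σ' y) := by
          intro c hc
          obtain ⟨hcyc, hcs⟩ := mem_cycS.mp hc
          have hins : insert z c.support = U := by
            rw [hcs]; exact Finset.insert_eq_self.mpr hzU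
          have hsgnc : sgn c = -(-1 : ℂ) ^ U.card := by
            have hs := hcyc.sign
            rw [hcs] at hs
            rw [sgn, hs]
            push_cast
            ring
          simp only [hF]
          rw [hins, hsgnc]
          ring
        rw [Finset.sum_congr rfl hFc, ← Finset.sum_mul]
        have hCS := kub hn hd B hB (Uᶜ.card) U rfl hU2 x
        have hDsub := IH (m - U.card) (by omega) (S \ U) x
          (by rw [Finset.card_sdiff_of_subset hUS, hcard])
        rw [hCS, hDsub]
        have e1 : m - 1 - (U.card - 1) = m - U.card := by omega
        have e2 : (-1 : ℂ) ^ (U.card - 1) = -(-1 : ℂ) ^ U.card := by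
          conv_rhs => rw [show U.card = (U.card - 1) + 1 from by omega]
          rw [pow_succ]
          ring
        simp only [hg]
        rw [e1, e2]
        ring
      rw [Finset.sum_congr rfl hinner, hF1]
      -- now: g 0 + ∑ U ∈ P2, g (U.card - 1) = descF m / d^m
      have hbij : ∑ U ∈ P2, g (U.card - 1)
          = ∑ V ∈ ((S.erase z).powerset).erase ∅, g V.card := by
        refine Finset.sum_bij' (fun U _ => U.erase z) (fun V _ => insert z V)
          ?_ ?_ ?_ ?_ ?_
        · intro U hU
          obtain ⟨hUS, hzU, hU2⟩ := Finset.mem_filter.mp hU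
          rw [Finset.mem_powerset] at hUS
          refine Finset.mem_erase.mpr ⟨?_, Finset.mem_powerset.mpr
            (Finset.erase_subset_erase z hUS)⟩
          have hpos : 0 < (U.erase z).card := by
            rw [Finset.card_erase_of_mem hzU]; omega
          exact Finset.nonempty_iff_ne_empty.mp (Finset.card_pos.mp hpos)
        · intro V hV
          obtain ⟨hVne, hVsub⟩ := Finset.mem_erase.mp hV
          rw [Finset.mem_powerset] at hVsub
          have hzV : z ∉ V := fun h => (Finset.mem_erase.mp (hVsub h)).1 rfl
          refine Finset.mem_filter.mpr ⟨Finset.mem_powerset.mpr ?_, Finset.mem_insert_self z V, ?_⟩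
          · exact Finset.insert_subset_iff.mpr ⟨hzS, hVsub.trans (Finset.erase_subset z S)⟩
          · rw [Finset.card_insert_of_notMem hzV]
            have : V.Nonempty := Finset.nonempty_iff_ne_empty.mpr hVne
            have := Finset.card_pos.mpr this
            omega
        · intro U hU
          obtain ⟨hUS, hzU, hU2⟩ := Finset.mem_filter.mp hU
          exact Finset.insert_erase hzU
        · intro V hV
          obtain ⟨hVne, hVsub⟩ := Finset.mem_erase.mp hV
          rw [Finset.mem_powerset] at hVsub
          have hzV : z ∉ V := fun h => (Finset.mem_erase.mp (hVsub h)).1 rfl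
          exact Finset.erase_insert hzV
        · intro U hU
          obtain ⟨hUS, hzU, hU2⟩ := Finset.mem_filter.mp hU
          rw [Finset.card_erase_of_mem hzU]
      rw [hbij]
      have h0mem : (∅ : Finset (Fin n)) ∈ (S.erase z).powerset :=
        Finset.mem_powerset.mpr (Finset.empty_subset _)
      have hzero : g 0 = g ((∅ : Finset (Fin n)).card) := by simp
      rw [hzero, Finset.add_sum_erase _ (fun V => g V.card) h0mem]
      rw [Finset.sum_powerset_apply_card]
      rw [hcerase]
      have hrange : m - 1 + 1 = m := by omega
      rw [hrange]
      have hsmul : ∀ j ∈ Finset.range m, (m - 1).choose j • g j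
          = ((m - 1).choose j : ℂ) * g j := by
        intro j _
        rw [nsmul_eq_mul]
      rw [Finset.sum_congr rfl hsmul]
      exact numeric hd hm

/-- If `n ≥ 2` orthonormal bases of `ℂ^d` (`d ≥ 1`) form an `n`UB, then for every index
tuple `x` the Gram determinant `det(⟨y_{x_y}|y'_{x_{y'}}⟩)` equals
`d(d−1)⋯(d−n+1)/d^n`; in particular it is independent of `x`. -/
theorem stmt_7 (n d : ℕ) (hn : 2 ≤ n) (hd : 1 ≤ d)
    (B : Fin n → OrthonormalBasis (Fin d) ℂ (EuclideanSpace ℂ (Fin d)))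
    (hB : IsNUB B) (x : Fin n → Fin d) :
    Matrix.det (Matrix.of fun y y' : Fin n => ⟪B y (x y), B y' (x y')⟫_ℂ)
      = (d.descFactorial n : ℂ) / (d : ℂ) ^ n := by
  classical
  have hperm : permS n Finset.univ = Finset.univ := by
    ext σ; simp [permS]
  have hmaster := master hn hd B hB n Finset.univ x (by simp)
  rw [hperm] at hmaster
  rw [← Matrix.det_transpose, Matrix.det_apply, ← hmaster]
  refine Finset.sum_congr rfl fun σ _ => ?_
  have hsmul : ∀ (u : ℤˣ) (c : ℂ), u • c = ((u : ℤ) : ℂ) * c := fun u c => by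
    rw [Units.smul_def, zsmul_eq_mul]
  rw [hsmul]
  rfl
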